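/- Let φ : ℝ → ℝ be continuous with φ([0,1]) ⊆ [0,1], φ(0) = 0 and φ(1) = 1. Suppose φ is differentiable at 0 from the right and at 1 from the left, with both one-sided derivatives equal to 0 (i.e., φ has derivative 0 at 0 within [0,∞) and derivative 0 at 1 within (−∞,1]). Then there exists h ∈ (0,1) with φ(h) = h. -/

import Mathlib

open Set Filter Topology

/-- If `φ : [0,1] → [0,1]` is continuous, fixes `0` and `1`, and has one-sided derivative
zero at both endpoints, then `φ` has a fixed point in the open interval `(0,1)`. -/
theorem exists_interior_fixed_point (φ : ℝ → ℝ) (hφ : Continuous φ)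
    (hmaps : MapsTo φ (Icc (0 : ℝ) 1) (Icc (0 : ℝ) 1))
    (h0 : φ 0 = 0) (h1 : φ 1 = 1)
    (hd0 : HasDerivWithinAt φ 0 (Ici (0 : ℝ)) 0)
    (hd1 : HasDerivWithinAt φ 0 (Iic (1 : ℝ)) 1) :
    ∃ h ∈ Ioo (0 : ℝ) 1, φ h = h := by
  set g : ℝ → ℝ := fun x => φ x - x with hg
  have hgc : Continuous g := hφ.sub continuous_id
  have hg0 : HasDerivWithinAt g (-1) (Ici (0 : ℝ)) 0 := by
    exact (by simpa using hd0.sub (hasDerivWithinAt_id 0 (Ici (0:ℝ))) : HasDerivWithinAt (φ - id) (-1) (Ici (0:ℝ)) 0)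
  have hg1 : HasDerivWithinAt g (-1) (Iic (1 : ℝ)) 1 := by
    exact (by simpa using hd1.sub (hasDerivWithinAt_id 1 (Iic (1:ℝ))) : HasDerivWithinAt (φ - id) (-1) (Iic (1:ℝ)) 1)
  rw [hasDerivWithinAt_iff_tendsto_slope] at hg0 hg1
  have t0 : Tendsto (slope g 0) (𝓝[>] 0) (𝓝 (-1)) :=
    hg0.mono_left (nhdsWithin_mono _ (fun x (hx : 0 < x) => ⟨le_of_lt hx, ne_of_gt hx⟩))
  have t1 : Tendsto (slope g 1) (𝓝[<] 1) (𝓝 (-1)) :=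
    hg1.mono_left (nhdsWithin_mono _ (fun x (hx : x < 1) => ⟨le_of_lt hx, ne_of_lt hx⟩))
  have e0 : ∀ᶠ x in 𝓝[>] (0:ℝ), slope g 0 x < 0 :=
    t0.eventually_lt_const (by norm_num)
  have e1 : ∀ᶠ x in 𝓝[<] (1:ℝ), slope g 1 x < 0 :=
    t1.eventually_lt_const (by norm_num)
  have m0 : Ioo (0:ℝ) (1/2) ∈ 𝓝[>] (0:ℝ) := Ioo_mem_nhdsGT_of_mem (by norm_num)
  have m1 : Ioo (1/2 : ℝ) 1 ∈ 𝓝[<] (1:ℝ) := Ioo_mem_nhdsLT_of_mem (by norm_num)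
  obtain ⟨a, ha, ha2⟩ := (e0.and (eventually_of_mem m0 (fun x hx => hx))).exists
  obtain ⟨b, hb, hb2⟩ := (e1.and (eventually_of_mem m1 (fun x hx => hx))).exists
  -- g a < 0
  have hga : g a < 0 := by
    have : slope g 0 a = g a / a := by
      simp [slope_def_field, hg, h0, div_eq_div_iff]
    rw [this] at ha
    rcases div_neg_iff.mp ha with ⟨_, h⟩ | ⟨h, _⟩
    · linarith [ha2.1]
    · exact h
  have hgb : 0 < g b := by
    have : slope g 1 b = (g b) / (b - 1) := by
      simp [slope_def_field, hg, h1]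
    rw [this] at hb
    have hb1 : b - 1 < 0 := by linarith [hb2.2]
    rcases div_neg_iff.mp hb with ⟨h, _⟩ | ⟨_, h'⟩
    · exact h
    · linarith
  have hab : a < b := lt_trans ha2.2 hb2.1
  have := intermediate_value_Ioo (le_of_lt hab) (hgc.continuousOn (s := Icc a b))
  have h0mem : (0:ℝ) ∈ Ioo (g a) (g b) := ⟨hga, hgb⟩
  obtain ⟨c, hc, hc0⟩ := this h0mem
  refine ⟨c, ⟨lt_trans ha2.1 hc.1, lt_trans hc.2 hb2.2⟩, ?_⟩
  have : φ c - c = 0 := hc0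
  linarith
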